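/- Let Q be a generalised quadrangle with point set P and line set L, let Γ be its point-line incidence graph, and let C be a code in Γ with |C| ≥ 2 whose minimum distance δ is odd. If Aut(C) acts transitively on C, then Q is self-dual; that is, there exists an automorphism of Γ that maps the set of point-vertices P onto the set of line-vertices L (and L onto P). -/

import Mathlib

/-- A finite generalised quadrangle of order `(s,t)`: each point is on `t+1` lines,
each line has `s+1` points, two distinct points lie on at most one common line,
two distinct lines meet in at most one common point, and for each non-incident
point-line pair `(p, ℓ)` there is a unique pair `(q, M)` with `p I M`, `q I M`
and `q I ℓ`. -/
structure GenQuad (P L : Type*) (s t : ℕ) where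
  I : P → L → Prop
  point_deg : ∀ p : P, Nat.card {ℓ : L // I p ℓ} = t + 1
  line_deg : ∀ ℓ : L, Nat.card {p : P // I p ℓ} = s + 1
  points_one_line : ∀ p₁ p₂ : P, p₁ ≠ p₂ → ∀ ℓ₁ ℓ₂ : L,
    I p₁ ℓ₁ → I p₂ ℓ₁ → I p₁ ℓ₂ → I p₂ ℓ₂ → ℓ₁ = ℓ₂
  lines_one_point : ∀ ℓ₁ ℓ₂ : L, ℓ₁ ≠ ℓ₂ → ∀ p₁ p₂ : P,
    I p₁ ℓ₁ → I p₁ ℓ₂ → I p₂ ℓ₁ → I p₂ ℓ₂ → p₁ = p₂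
  gq_axiom : ∀ (p : P) (ℓ : L), ¬ I p ℓ →
    ∃! qM : P × L, I p qM.2 ∧ I qM.1 qM.2 ∧ I qM.1 ℓ

/-- The point-line incidence graph of a generalised quadrangle. -/
def incGraph {P L : Type*} {s t : ℕ} (Q : GenQuad P L s t) : SimpleGraph (P ⊕ L) where
  Adj x y :=
    (∃ p ℓ, x = Sum.inl p ∧ y = Sum.inr ℓ ∧ Q.I p ℓ) ∨
    (∃ p ℓ, x = Sum.inr ℓ ∧ y = Sum.inl p ∧ Q.I p ℓ)
  symm := by
    constructor
    rintro x y (⟨p, ℓ, rfl, rfl, h⟩ | ⟨p, ℓ, rfl, rfl, h⟩)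
    · exact Or.inr ⟨p, ℓ, rfl, rfl, h⟩
    · exact Or.inl ⟨p, ℓ, rfl, rfl, h⟩
  loopless := by
    constructor
    rintro x (⟨p, ℓ, rfl, h, -⟩ | ⟨p, ℓ, rfl, h, -⟩) <;> exact absurd h (by simp)

/-- The minimum distance of a code `C` in a graph `Γ`. -/
noncomputable def minDist {V : Type*} (Γ : SimpleGraph V) (C : Set V) : ℕ :=
  sInf {d | ∃ x ∈ C, ∃ y ∈ C, x ≠ y ∧ Γ.dist x y = d}

/-- The distance from a vertex `γ` to a code `C`. -/
noncomputable def distToCode {V : Type*} (Γ : SimpleGraph V) (C : Set V) (γ : V) : ℕ :=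
  sInf {d | ∃ x ∈ C, Γ.dist γ x = d}

/-- The covering radius of a code `C` in a graph `Γ`. -/
noncomputable def covRad {V : Type*} (Γ : SimpleGraph V) (C : Set V) : ℕ :=
  sSup {d | ∃ γ : V, distToCode Γ C γ = d}

/-- `nbhd Γ C i` is the set `C_i` of vertices at distance exactly `i` from `C`. -/
def nbhd {V : Type*} (Γ : SimpleGraph V) (C : Set V) (i : ℕ) : Set V :=
  {γ | distToCode Γ C γ = i}

/-- `g` is an automorphism of the graph `Γ`. -/
def IsGraphAut {V : Type*} (Γ : SimpleGraph V) (g : V ≃ V) : Prop :=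
  ∀ x y : V, Γ.Adj (g x) (g y) ↔ Γ.Adj x y

/-- `Aut(C)` (automorphisms of `Γ` preserving `C` setwise) acts transitively on `S`. -/
def TransOn {V : Type*} (Γ : SimpleGraph V) (C S : Set V) : Prop :=
  ∀ x ∈ S, ∀ y ∈ S, ∃ g : V ≃ V, IsGraphAut Γ g ∧ (∀ v, g v ∈ C ↔ v ∈ C) ∧ g x = y

/-- `C` is neighbour-transitive: `Aut(C)` is transitive on `C` and on `C₁`. -/
def NeighbourTransitive {V : Type*} (Γ : SimpleGraph V) (C : Set V) : Prop :=
  TransOn Γ C C ∧ TransOn Γ C (nbhd Γ C 1)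

section Aux
variable {P L : Type*} {s t : ℕ} (Q : GenQuad P L s t)

/-- side function: 0 on points, 1 on lines. -/
def cfun : (P ⊕ L) → ZMod 2 := Sum.elim (fun _ => 0) (fun _ => 1)

lemma cfun_adj {u v : P ⊕ L} (h : (incGraph Q).Adj u v) :
    cfun v = cfun u + 1 := by
  rcases h with ⟨p, ℓ, rfl, rfl, -⟩ | ⟨p, ℓ, rfl, rfl, -⟩ <;> simp [cfun] <;> decide

lemma cfun_walk {u v : P ⊕ L} (w : (incGraph Q).Walk u v) :
    cfun v = cfun u + w.length := by
  induction w with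
  | nil => simp
  | cons h w ih =>
    rw [SimpleGraph.Walk.length_cons, ih, cfun_adj Q h]
    push_cast
    ring

lemma exists_line (p : P) : ∃ ℓ, Q.I p ℓ := by
  have h := Q.point_deg p
  have : Nonempty {ℓ : L // Q.I p ℓ} :=
    (Nat.card_ne_zero.mp (by rw [h]; exact Nat.succ_ne_zero t)).1
  obtain ⟨ℓ, hℓ⟩ := this
  exact ⟨ℓ, hℓ⟩

lemma exists_point (ℓ : L) : ∃ p, Q.I p ℓ := by
  have h := Q.line_deg ℓ
  have : Nonempty {p : P // Q.I p ℓ} :=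
    (Nat.card_ne_zero.mp (by rw [h]; exact Nat.succ_ne_zero s)).1
  obtain ⟨p, hp⟩ := this
  exact ⟨p, hp⟩

lemma inc_reach_pl (p : P) (ℓ : L) :
    (incGraph Q).Reachable (Sum.inl p) (Sum.inr ℓ) := by
  by_cases h : Q.I p ℓ
  · exact SimpleGraph.Adj.reachable (Or.inl ⟨p, ℓ, rfl, rfl, h⟩)
  · obtain ⟨⟨q, M⟩, ⟨h1, h2, h3⟩, -⟩ := Q.gq_axiom p ℓ h
    exact (SimpleGraph.Adj.reachable (Or.inl ⟨p, M, rfl, rfl, h1⟩)).trans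
      (((SimpleGraph.Adj.reachable (Or.inr ⟨q, M, rfl, rfl, h2⟩)).trans
        (SimpleGraph.Adj.reachable (Or.inl ⟨q, ℓ, rfl, rfl, h3⟩))))

lemma inc_preconnected : (incGraph Q).Preconnected := by
  intro x y
  match x, y with
  | Sum.inl p, Sum.inr ℓ => exact inc_reach_pl Q p ℓ
  | Sum.inr ℓ, Sum.inl p => exact (inc_reach_pl Q p ℓ).symm
  | Sum.inl p₁, Sum.inl p₂ =>
    obtain ⟨ℓ, hℓ⟩ := exists_line Q p₂
    exact (inc_reach_pl Q p₁ ℓ).trans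
      (SimpleGraph.Adj.reachable (Or.inr ⟨p₂, ℓ, rfl, rfl, hℓ⟩))
  | Sum.inr ℓ₁, Sum.inr ℓ₂ =>
    obtain ⟨p, hp⟩ := exists_point Q ℓ₂
    exact ((inc_reach_pl Q p ℓ₁).symm).trans
      (SimpleGraph.Adj.reachable (Or.inl ⟨p, ℓ₂, rfl, rfl, hp⟩))

lemma aut_shift (g : (P ⊕ L) ≃ (P ⊕ L)) (hg : IsGraphAut (incGraph Q) g)
    {u v : P ⊕ L} (h : (incGraph Q).Reachable u v) :
    cfun (g u) + cfun u = cfun (g v) + cfun v := by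
  obtain ⟨w⟩ := h
  induction w with
  | nil => rfl
  | @cons a b c ha w ih =>
    have hb : cfun b = cfun a + 1 := cfun_adj Q ha
    have hgb : cfun (g b) = cfun (g a) + 1 := cfun_adj Q ((hg a b).mpr ha)
    have htwo : (2 : ZMod 2) = 0 := by decide
    linear_combination ih - hb - hgb - htwo

end Aux

/-- If a code with odd minimum distance in a generalised quadrangle
admits a transitive group of automorphisms, then the quadrangle is self-dual: some
automorphism of the incidence graph swaps the point-vertices and the line-vertices. -/

theorem stmt1 {P L : Type*} [Finite P] [Finite L] {s t : ℕ}
    (Q : GenQuad P L s t) (hs : 1 ≤ s) (ht : 1 ≤ t)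
    (C : Set (P ⊕ L)) (hC2 : 2 ≤ C.ncard)
    (hodd : Odd (minDist (incGraph Q) C))
    (htrans : TransOn (incGraph Q) C C) :
    ∃ g : (P ⊕ L) ≃ (P ⊕ L), IsGraphAut (incGraph Q) g ∧
      g '' (Set.range Sum.inl) = Set.range Sum.inr ∧
      g '' (Set.range Sum.inr) = Set.range Sum.inl := by
  classical
  -- the set defining the minimum distance is nonempty
  have hne : {d | ∃ x ∈ C, ∃ y ∈ C, x ≠ y ∧ (incGraph Q).dist x y = d}.Nonempty := by
    by_contra h
    rw [Set.not_nonempty_iff_eq_empty] at h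
    have h0 : minDist (incGraph Q) C = 0 := by rw [minDist, h, Nat.sInf_empty]
    rw [h0] at hodd
    simp at hodd
  have hmem := Nat.sInf_mem hne
  obtain ⟨x, hx, y, hy, hxy, hd⟩ := hmem
  have hoddd : Odd ((incGraph Q).dist x y) := by rw [hd]; exact hodd
  -- x and y lie on opposite sides
  have hcxy : cfun x ≠ cfun y := by
    intro hc
    obtain ⟨w, hw⟩ :=
      ((inc_preconnected Q) x y).exists_walk_length_eq_dist
    have hwc := cfun_walk Q w
    rw [hw, hc] at hwc
    have h0 : (((incGraph Q).dist x y : ℕ) : ZMod 2) = 0 := (left_eq_add.mp hwc)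
    obtain ⟨k, hk⟩ := hoddd
    rw [hk] at h0
    push_cast at h0
    rw [show (2 : ZMod 2) = 0 by decide] at h0
    simp at h0
  obtain ⟨g, hgaut, hgC, hgx⟩ := htrans x hx y hy
  -- g shifts the side of every vertex
  have lem : ∀ a b u v : ZMod 2, a + b = u + v → a = b + 1 → u = v + 1 := by decide
  have h2 : cfun y = cfun x + 1 := by
    revert hcxy; generalize cfun x = a; generalize cfun y = b; revert a b; decide
  have hshift : ∀ v, cfun (g v) = cfun v + 1 := by
    intro v
    have h1 := aut_shift Q g hgaut (inc_preconnected Q x v)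
    rw [hgx] at h1
    exact lem (cfun y) (cfun x) (cfun (g v)) (cfun v) h1 h2
  have hflip1 : ∀ p : P, ∃ ℓ, g (Sum.inl p) = Sum.inr ℓ := by
    intro p
    have h := hshift (Sum.inl p)
    cases hgp : g (Sum.inl p) with
    | inl p' => rw [hgp] at h; simp [cfun] at h
    | inr ℓ => exact ⟨ℓ, rfl⟩
  have hflip2 : ∀ ℓ : L, ∃ p, g (Sum.inr ℓ) = Sum.inl p := by
    intro ℓ
    have h := hshift (Sum.inr ℓ)
    cases hgl : g (Sum.inr ℓ) with
    | inl p => exact ⟨p, rfl⟩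
    | inr ℓ' =>
      rw [hgl] at h
      simp [cfun] at h
  refine ⟨g, hgaut, ?_, ?_⟩
  · ext v
    constructor
    · rintro ⟨u, ⟨p, rfl⟩, rfl⟩
      obtain ⟨ℓ, hℓ⟩ := hflip1 p
      exact ⟨ℓ, hℓ.symm⟩
    · rintro ⟨ℓ, rfl⟩
      refine ⟨g.symm (Sum.inr ℓ), ?_, g.apply_symm_apply _⟩
      cases hgs : g.symm (Sum.inr ℓ) with
      | inl p' => exact ⟨p', rfl⟩
      | inr ℓ' =>
        obtain ⟨p'', hp''⟩ := hflip2 ℓ'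
        have : g (g.symm (Sum.inr ℓ)) = g (Sum.inr ℓ') := by rw [hgs]
        rw [g.apply_symm_apply, hp''] at this
        exact absurd this (by simp)
  · ext v
    constructor
    · rintro ⟨u, ⟨ℓ, rfl⟩, rfl⟩
      obtain ⟨p, hp⟩ := hflip2 ℓ
      exact ⟨p, hp.symm⟩
    · rintro ⟨p, rfl⟩
      refine ⟨g.symm (Sum.inl p), ?_, g.apply_symm_apply _⟩
      cases hgs : g.symm (Sum.inl p) with
      | inr ℓ' => exact ⟨ℓ', rfl⟩
      | inl p' =>
        obtain ⟨ℓ'', hℓ''⟩ := hflip1 p'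
        have : g (g.symm (Sum.inl p)) = g (Sum.inl p') := by rw [hgs]
        rw [g.apply_symm_apply, hℓ''] at this
        exact absurd this (by simp)
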